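/- For every ξ′ = (ξ₁,ξ₂) ∈ ℝ² and every μ ∈ ℝ with μ ≠ 0, setting ρ = √(|ξ′|² + μ²) and M₊(ξ′,μ) = ξ₁α₁ + ξ₂α₂ + iρα₃, the kernel of the linear map ℂ⁴ → ℂ⁴ given by M₊(ξ′,μ) − iμ·I₄ has dimension 2, and the vectors h₁,₊(ξ′,μ), h₂,₊(ξ′,μ) form a basis of this kernel. -/

import Mathlib

open Matrix Complex

noncomputable section

/-- Pauli matrices -/
def σ1 : Matrix (Fin 2) (Fin 2) ℂ := !![0, 1; 1, 0]
def σ2 : Matrix (Fin 2) (Fin 2) ℂ := !![0, -I; I, 0]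
def σ3 : Matrix (Fin 2) (Fin 2) ℂ := !![1, 0; 0, -1]

/-- Dirac matrices, as 4×4 block matrices indexed by `Fin 2 ⊕ Fin 2`. -/
def α1 : Matrix (Fin 2 ⊕ Fin 2) (Fin 2 ⊕ Fin 2) ℂ := Matrix.fromBlocks 0 σ1 σ1 0
def α2 : Matrix (Fin 2 ⊕ Fin 2) (Fin 2 ⊕ Fin 2) ℂ := Matrix.fromBlocks 0 σ2 σ2 0
def α3 : Matrix (Fin 2 ⊕ Fin 2) (Fin 2 ⊕ Fin 2) ℂ := Matrix.fromBlocks 0 σ3 σ3 0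

/-- `ρ = √(|ξ′|² + μ²)`. -/
def ρ (ξ₁ ξ₂ μ : ℝ) : ℝ := Real.sqrt (ξ₁ ^ 2 + ξ₂ ^ 2 + μ ^ 2)

/-- `Λ₊(ξ′,μ) = ξ₁σ₁ + ξ₂σ₂ + iρσ₃`. -/
def Λp (ξ₁ ξ₂ μ : ℝ) : Matrix (Fin 2) (Fin 2) ℂ :=
  (ξ₁ : ℂ) • σ1 + (ξ₂ : ℂ) • σ2 + (I * (ρ ξ₁ ξ₂ μ : ℝ)) • σ3

/-- `M₊(ξ′,μ) = ξ₁α₁ + ξ₂α₂ + iρα₃`. -/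
def Mp (ξ₁ ξ₂ μ : ℝ) : Matrix (Fin 2 ⊕ Fin 2) (Fin 2 ⊕ Fin 2) ℂ :=
  (ξ₁ : ℂ) • α1 + (ξ₂ : ℂ) • α2 + (I * (ρ ξ₁ ξ₂ μ : ℝ)) • α3

/-- `e₁ = (1,0)`, `e₂ = (0,1) ∈ ℂ²`. -/
def e1 : Fin 2 → ℂ := ![1, 0]
def e2 : Fin 2 → ℂ := ![0, 1]

/-- `h₁,₊ = (iμ·e₁, Λ₊e₁)` and `h₂,₊ = (Λ₊e₂, iμ·e₂)` in `ℂ⁴`. -/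
def h1p (ξ₁ ξ₂ μ : ℝ) : (Fin 2 ⊕ Fin 2) → ℂ :=
  Sum.elim ((I * μ) • e1) ((Λp ξ₁ ξ₂ μ).mulVec e1)
def h2p (ξ₁ ξ₂ μ : ℝ) : (Fin 2 ⊕ Fin 2) → ℂ :=
  Sum.elim ((Λp ξ₁ ξ₂ μ).mulVec e2) ((I * μ) • e2)

/-- for `μ ≠ 0`, the kernel of `M₊(ξ′,μ) − iμ·I₄` (as a linear map `ℂ⁴ → ℂ⁴`)
has dimension 2, and `h₁,₊(ξ′,μ), h₂,₊(ξ′,μ)` form a basis of this kernel. -/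
theorem kernel_dim_two_and_basis (ξ₁ ξ₂ μ : ℝ) (hμ : μ ≠ 0) :
    Module.finrank ℂ
        (LinearMap.ker (Matrix.toLin' (Mp ξ₁ ξ₂ μ - (I * μ) • 1))) = 2 ∧
    LinearIndependent ℂ ![h1p ξ₁ ξ₂ μ, h2p ξ₁ ξ₂ μ] ∧
    Submodule.span ℂ {h1p ξ₁ ξ₂ μ, h2p ξ₁ ξ₂ μ}
      = LinearMap.ker (Matrix.toLin' (Mp ξ₁ ξ₂ μ - (I * μ) • 1)) := by
  set r : ℝ := ρ ξ₁ ξ₂ μ with hrdef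
  have hrpos : (0:ℝ) < r := Real.sqrt_pos.2 (by positivity)
  have hr0 : (r:ℂ) ≠ 0 := by exact_mod_cast hrpos.ne'
  have hμC : (μ:ℂ) ≠ 0 := by exact_mod_cast hμ
  have hρsq : ((r:ℂ))^2 = (ξ₁:ℂ)^2+(ξ₂:ℂ)^2+(μ:ℂ)^2 := by
    have h : r^2 = ξ₁^2+ξ₂^2+μ^2 := Real.sq_sqrt (by positivity)
    exact_mod_cast congrArg (Complex.ofReal) h
  have hΛ1 : (Λp ξ₁ ξ₂ μ).mulVec e1 = ![I * r, ξ₁ + I * ξ₂] := by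
    funext i; fin_cases i <;>
      (simp [Λp, σ1, σ2, σ3, e1, mulVec, dotProduct, Fin.sum_univ_two]; try ring)
  have hΛ2 : (Λp ξ₁ ξ₂ μ).mulVec e2 = ![(ξ₁ : ℂ) - I * ξ₂, -(I * r)] := by
    funext i; fin_cases i <;>
      (simp [Λp, σ1, σ2, σ3, e2, mulVec, dotProduct, Fin.sum_univ_two]; try ring)
  have hrow : ∀ v : (Fin 2 ⊕ Fin 2) → ℂ,
      (Mp ξ₁ ξ₂ μ - (I * μ) • 1).mulVec v = Sum.elim
        ![I * r * v (Sum.inr 0) + ((ξ₁:ℂ) - I * ξ₂) * v (Sum.inr 1) - I * μ * v (Sum.inl 0),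
          ((ξ₁:ℂ) + I * ξ₂) * v (Sum.inr 0) - I * r * v (Sum.inr 1) - I * μ * v (Sum.inl 1)]
        ![I * r * v (Sum.inl 0) + ((ξ₁:ℂ) - I * ξ₂) * v (Sum.inl 1) - I * μ * v (Sum.inr 0),
          ((ξ₁:ℂ) + I * ξ₂) * v (Sum.inl 0) - I * r * v (Sum.inl 1) - I * μ * v (Sum.inr 1)] := by
    intro v; funext i
    rcases i with i | i <;> fin_cases i <;>
      (simp [Mp, α1, α2, α3, σ1, σ2, σ3, mulVec, dotProduct, Fintype.sum_sum_type,
        Fin.sum_univ_two, fromBlocks, Matrix.one_apply]; ring)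
  have hker : ∀ v, v ∈ LinearMap.ker (Matrix.toLin' (Mp ξ₁ ξ₂ μ - (I * μ) • 1)) ↔
      (Mp ξ₁ ξ₂ μ - (I * μ) • 1).mulVec v = 0 := by
    intro v; rw [LinearMap.mem_ker, Matrix.toLin'_apply]
  have h1e : h1p ξ₁ ξ₂ μ = Sum.elim ![I * μ, 0] ![I * r, (ξ₁:ℂ) + I * ξ₂] := by
    unfold h1p
    rw [hΛ1]
    funext i
    rcases i with i | i <;> fin_cases i <;> simp [e1]
  have h2e : h2p ξ₁ ξ₂ μ = Sum.elim ![(ξ₁:ℂ) - I * ξ₂, -(I * r)] ![0, I * μ] := by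
    unfold h2p
    rw [hΛ2]
    funext i
    rcases i with i | i <;> fin_cases i <;> simp [e2]
  have hmem1 : h1p ξ₁ ξ₂ μ ∈ LinearMap.ker (Matrix.toLin' (Mp ξ₁ ξ₂ μ - (I * μ) • 1)) := by
    rw [hker, hrow, h1e]
    funext i
    rcases i with i | i <;> fin_cases i <;>
      simp only [Sum.elim_inl, Sum.elim_inr, Fin.zero_eta, Fin.mk_one, Matrix.cons_val_zero,
        Matrix.cons_val_one, Matrix.head_cons, Pi.zero_apply]
    all_goals try ring
    all_goals linear_combination (-1:ℂ) * hρsq + ((r:ℂ)^2 - (ξ₂:ℂ)^2 - (μ:ℂ)^2) * Complex.I_sq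
  have hmem2 : h2p ξ₁ ξ₂ μ ∈ LinearMap.ker (Matrix.toLin' (Mp ξ₁ ξ₂ μ - (I * μ) • 1)) := by
    rw [hker, hrow, h2e]
    funext i
    rcases i with i | i <;> fin_cases i <;>
      simp only [Sum.elim_inl, Sum.elim_inr, Fin.zero_eta, Fin.mk_one, Matrix.cons_val_zero,
        Matrix.cons_val_one, Matrix.head_cons, Pi.zero_apply]
    all_goals try ring
    all_goals linear_combination (-1:ℂ) * hρsq + ((r:ℂ)^2 - (ξ₂:ℂ)^2 - (μ:ℂ)^2) * Complex.I_sq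
  have hli : LinearIndependent ℂ ![h1p ξ₁ ξ₂ μ, h2p ξ₁ ξ₂ μ] := by
    rw [LinearIndependent.pair_iff]
    intro s t hst
    rw [h1e, h2e] at hst
    have h1 := congrFun hst (Sum.inl 1)
    have h0 := congrFun hst (Sum.inl 0)
    simp only [Pi.add_apply, Pi.smul_apply, Sum.elim_inl, Matrix.cons_val_zero,
      Matrix.cons_val_one, Matrix.head_cons, smul_eq_mul, Pi.zero_apply] at h1 h0
    have ht : t = 0 := by
      simpa [mul_eq_zero, Complex.I_ne_zero, hr0] using h1
    subst ht
    have hs : s = 0 := by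
      simpa [mul_eq_zero, Complex.I_ne_zero, hμC] using h0
    exact ⟨hs, rfl⟩
  have hsub : Submodule.span ℂ {h1p ξ₁ ξ₂ μ, h2p ξ₁ ξ₂ μ}
      ≤ LinearMap.ker (Matrix.toLin' (Mp ξ₁ ξ₂ μ - (I * μ) • 1)) := by
    rw [Submodule.span_le]
    rintro x (rfl | rfl)
    · exact hmem1
    · exact hmem2
  have hsup : LinearMap.ker (Matrix.toLin' (Mp ξ₁ ξ₂ μ - (I * μ) • 1))
      ≤ Submodule.span ℂ {h1p ξ₁ ξ₂ μ, h2p ξ₁ ξ₂ μ} := by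
    intro v hv
    rw [hker, hrow] at hv
    have E3 := congrFun hv (Sum.inr 0)
    have E4 := congrFun hv (Sum.inr 1)
    simp only [Sum.elim_inr, Pi.zero_apply, Matrix.cons_val_zero, Matrix.cons_val_one,
      Matrix.head_cons] at E3 E4
    refine Submodule.mem_span_pair.2
      ⟨(v (Sum.inl 0) - (I * v (Sum.inl 1) / r) * ((ξ₁:ℂ) - I * ξ₂)) / (I * μ),
        I * v (Sum.inl 1) / r, ?_⟩
    rw [h1e, h2e]
    have := Complex.I_ne_zero
    funext i
    rcases i with i | i <;> fin_cases i <;>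
      simp only [Pi.add_apply, Pi.smul_apply, Sum.elim_inl, Sum.elim_inr, smul_eq_mul,
        Fin.zero_eta, Fin.mk_one, Matrix.cons_val_zero, Matrix.cons_val_one, Matrix.head_cons, mul_zero, mul_one]
    · field_simp
      ring
    · field_simp
      linear_combination (-(v (Sum.inl 1))) * Complex.I_sq
    · field_simp
      linear_combination (-I) * E3 + ((r:ℂ) * v (Sum.inl 0) - (μ:ℂ) * v (Sum.inr 0)) * Complex.I_sq
    · field_simp
      linear_combination (r:ℂ) * E4 + (I * v (Sum.inl 1)) * hρsq +
        (I * v (Sum.inl 1) * ((ξ₂:ℂ)^2 + (μ:ℂ)^2)) * Complex.I_sq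
  have hspan : Submodule.span ℂ {h1p ξ₁ ξ₂ μ, h2p ξ₁ ξ₂ μ}
      = LinearMap.ker (Matrix.toLin' (Mp ξ₁ ξ₂ μ - (I * μ) • 1)) := le_antisymm hsub hsup
  refine ⟨?_, hli, hspan⟩
  rw [← hspan]
  have hset : ({h1p ξ₁ ξ₂ μ, h2p ξ₁ ξ₂ μ} : Set _) = Set.range ![h1p ξ₁ ξ₂ μ, h2p ξ₁ ξ₂ μ] := by
    rw [Matrix.range_cons_cons_empty]
  rw [hset, finrank_span_eq_card hli, Fintype.card_fin]
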